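/- For every positive integer n, Σ_{k=1}^{n} μ(k / gcd(n,k)) · (φ(k) / φ(k / gcd(n,k))) · Σ_{l=1}^{⌊n/k⌋} log((k·l)²/n)/(k·l) = 0. -/

import Mathlib

open Finset Real ArithmeticFunction
open scoped ArithmeticFunction.Moebius ArithmeticFunction.zeta

noncomputable def gfun (n : ℕ) : ℕ → ℝ := fun k =>
  (μ (k / Nat.gcd n k) : ℝ) * ((Nat.totient k : ℝ) / (Nat.totient (k / Nat.gcd n k) : ℝ))

lemma gfun_zero (n : ℕ) (hn : n ≠ 0) : gfun n 0 = 0 := by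
  simp [gfun, Nat.gcd_zero_right, Nat.zero_div]

lemma gfun_of_dvd (n : ℕ) {k : ℕ} (hk : k ≠ 0) (h : k ∣ n) :
    gfun n k = (Nat.totient k : ℝ) := by
  have : Nat.gcd n k = k := Nat.gcd_eq_right h
  simp [gfun, this, Nat.div_self (Nat.pos_of_ne_zero hk)]

noncomputable def Gfun (n : ℕ) (hn : n ≠ 0) : ArithmeticFunction ℝ :=
  ⟨fun m => if m ∣ n then (m : ℝ) else 0, by simp [Nat.zero_dvd, hn]⟩

noncomputable def Ffun (n : ℕ) (hn : n ≠ 0) : ArithmeticFunction ℝ :=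
  ⟨gfun n, gfun_zero n hn⟩

lemma Ffun_mult (n : ℕ) (hn : n ≠ 0) : (Ffun n hn).IsMultiplicative := by
  constructor
  · show gfun n 1 = 1
    rw [gfun_of_dvd n one_ne_zero (one_dvd n)]; simp
  · intro a b cop
    show gfun n (a * b) = gfun n a * gfun n b
    rcases eq_or_ne a 0 with rfl | ha
    · have : b = 1 := by simpa [Nat.coprime_zero_left] using cop
      simp [this, gfun_zero n hn]
    rcases eq_or_ne b 0 with rfl | hb
    · have : a = 1 := by simpa [Nat.coprime_zero_right] using cop
      simp [this, gfun_zero n hn]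
    have hga : Nat.gcd n a ∣ a := Nat.gcd_dvd_right n a
    have hgb : Nat.gcd n b ∣ b := Nat.gcd_dvd_right n b
    have hgcd : Nat.gcd n (a * b) = Nat.gcd n a * Nat.gcd n b := cop.gcd_mul n
    have hdiv : a * b / (Nat.gcd n a * Nat.gcd n b) = (a / Nat.gcd n a) * (b / Nat.gcd n b) :=
      (Nat.div_mul_div_comm hga hgb).symm
    have hcop' : Nat.Coprime (a / Nat.gcd n a) (b / Nat.gcd n b) :=
      Nat.Coprime.coprime_dvd_left (Nat.div_dvd_of_dvd hga)
        (Nat.Coprime.coprime_dvd_right (Nat.div_dvd_of_dvd hgb) cop)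
    have hmu : μ ((a / Nat.gcd n a) * (b / Nat.gcd n b))
        = μ (a / Nat.gcd n a) * μ (b / Nat.gcd n b) :=
      isMultiplicative_moebius.map_mul_of_coprime hcop'
    have htot : Nat.totient (a * b) = Nat.totient a * Nat.totient b := Nat.totient_mul cop
    have htot' : Nat.totient ((a / Nat.gcd n a) * (b / Nat.gcd n b))
        = Nat.totient (a / Nat.gcd n a) * Nat.totient (b / Nat.gcd n b) :=
      Nat.totient_mul hcop'
    unfold gfun
    rw [hgcd, hdiv, hmu, htot, htot']
    push_cast
    ring

lemma Gfun_mult (n : ℕ) (hn : n ≠ 0) : (Gfun n hn).IsMultiplicative := by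
  constructor
  · show (if (1:ℕ) ∣ n then ((1:ℕ) : ℝ) else 0) = 1
    simp
  · intro a b cop
    show (if a * b ∣ n then ((a*b : ℕ) : ℝ) else 0)
        = (if a ∣ n then (a : ℝ) else 0) * (if b ∣ n then (b : ℝ) else 0)
    by_cases ha : a ∣ n
    · by_cases hb : b ∣ n
      · rw [if_pos (cop.mul_dvd_of_dvd_of_dvd ha hb), if_pos ha, if_pos hb]; push_cast; ring
      · rw [if_neg (fun h => hb ((dvd_mul_left b a).trans h)), if_neg hb, mul_zero]
    · rw [if_neg (fun h => ha ((dvd_mul_right a b).trans h)), if_neg ha, zero_mul]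

lemma gcd_pow_eq (n : ℕ) (hn : n ≠ 0) {p : ℕ} (hp : p.Prime) {j : ℕ}
    (hj : n.factorization p ≤ j) : Nat.gcd n (p ^ j) = p ^ n.factorization p := by
  obtain ⟨c, hcj, hc⟩ := (Nat.dvd_prime_pow hp).mp (Nat.gcd_dvd_right n (p ^ j))
  have hcb : c ≤ n.factorization p :=
    (Nat.Prime.pow_dvd_iff_le_factorization hp hn).mp (hc ▸ Nat.gcd_dvd_left n (p ^ j))
  have hbc : n.factorization p ≤ c := by
    have hdvd : p ^ n.factorization p ∣ Nat.gcd n (p ^ j) :=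
      Nat.dvd_gcd (Nat.ordProj_dvd n p) (pow_dvd_pow p hj)
    rw [hc] at hdvd
    exact (Nat.pow_dvd_pow_iff_le_right hp.one_lt).mp hdvd
  rw [hc, le_antisymm hcb hbc]

lemma key_prime_pow (n : ℕ) (hn : n ≠ 0) {p : ℕ} (hp : p.Prime) (i : ℕ) :
    ∑ d ∈ (p ^ i).divisors, gfun n d = if p ^ i ∣ n then ((p ^ i : ℕ) : ℝ) else 0 := by
  by_cases hpi : p ^ i ∣ n
  · rw [if_pos hpi]
    rw [Finset.sum_congr rfl (fun d hd => ?_)]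
    · show ∑ d ∈ (p ^ i).divisors, (Nat.totient d : ℝ) = _
      rw [← Nat.cast_sum]
      rw [Nat.sum_totient]
    · obtain ⟨hd1, hd2⟩ := Nat.mem_divisors.mp hd
      exact gfun_of_dvd n (fun h => hd2 (by simpa [h] using hd1)) (hd1.trans hpi)
  · rw [if_neg hpi]
    set b := n.factorization p with hb
    have hbi : b + 1 ≤ i := by
      by_contra h
      push_neg at h
      exact hpi ((pow_dvd_pow p (Nat.lt_succ_iff.mp h)).trans (Nat.ordProj_dvd n p))
    have hpb : p ^ b ∣ n := Nat.ordProj_dvd n p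
    have hgj : ∀ j, b ≤ j → gfun n (p ^ j) =
        (μ (p ^ (j - b)) : ℝ) * ((Nat.totient (p ^ j) : ℝ) / (Nat.totient (p ^ (j - b)) : ℝ)) := by
      intro j hjb
      unfold gfun
      rw [gcd_pow_eq n hn hp hjb, Nat.pow_div hjb hp.pos]
    rw [Nat.sum_divisors_prime_pow hp]
    have hsplit : range (i + 1) = range (b + 2) ∪ Finset.Ico (b + 2) (i + 1) := by
      rw [Finset.range_eq_Ico, Finset.range_eq_Ico, Finset.Ico_union_Ico_eq_Ico (Nat.zero_le _) (by omega)]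
    rw [hsplit, Finset.sum_union (by
      rw [Finset.range_eq_Ico]
      exact Finset.Ico_disjoint_Ico_consecutive 0 (b + 2) (i + 1))]
    have h2 : ∑ j ∈ Finset.Ico (b + 2) (i + 1), gfun n (p ^ j) = 0 := by
      refine Finset.sum_eq_zero fun j hj => ?_
      obtain ⟨hj1, _⟩ := Finset.mem_Ico.mp hj
      rw [hgj j (by omega)]
      rw [moebius_apply_prime_pow hp (by omega)]
      rw [if_neg (by omega)]
      simp
    rw [h2, add_zero, Finset.sum_range_succ]
    have h1 : ∑ j ∈ range (b + 1), gfun n (p ^ j) = ((p ^ b : ℕ) : ℝ) := by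
      rw [Finset.sum_congr rfl (fun j hj => ?_)]
      · show ∑ j ∈ range (b + 1), ((Nat.totient (p ^ j) : ℕ) : ℝ) = _
        rw [← Nat.cast_sum, ← Nat.sum_divisors_prime_pow hp, Nat.sum_totient]
      · have hjb : j ≤ b := Nat.lt_succ_iff.mp (Finset.mem_range.mp hj)
        exact gfun_of_dvd n (pow_ne_zero j hp.pos.ne') ((pow_dvd_pow p hjb).trans hpb)
    rw [h1]
    have h3 : gfun n (p ^ (b + 1)) = -((p ^ b : ℕ) : ℝ) := by
      rw [hgj (b + 1) (by omega)]
      have : b + 1 - b = 1 := by omega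
      rw [this, pow_one, moebius_apply_prime hp]
      rw [Nat.totient_prime_pow hp (Nat.succ_pos b), Nat.totient_prime hp]
      have hp1 : ((p - 1 : ℕ) : ℝ) ≠ 0 :=
        Nat.cast_ne_zero.mpr (by have := hp.two_le; omega)
      push_cast [Nat.succ_sub_one]
      field_simp
    rw [h3]
    ring

lemma divisor_sum_eq (n : ℕ) (hn : n ≠ 0) (m : ℕ) :
    ∑ k ∈ m.divisors, gfun n k = if m ∣ n then (m : ℝ) else 0 := by
  have hmult : ((Ffun n hn) * ζ).IsMultiplicative :=
    (Ffun_mult n hn).mul isMultiplicative_zeta.natCast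
  have heq : (Ffun n hn) * ζ = Gfun n hn := by
    rw [ArithmeticFunction.IsMultiplicative.eq_iff_eq_on_prime_powers _ hmult _ (Gfun_mult n hn)]
    intro p i hp
    rw [coe_mul_zeta_apply]
    show ∑ d ∈ (p ^ i).divisors, gfun n d = _
    rw [key_prime_pow n hn hp i]
    rfl
  have h2 : ((Ffun n hn) * ζ) m = ∑ i ∈ m.divisors, (Ffun n hn) i := coe_mul_zeta_apply
  rw [heq] at h2
  exact h2.symm

lemma swap_sum (n : ℕ) (h : ℕ → ℕ → ℝ) :
    ∑ k ∈ Icc 1 n, ∑ l ∈ Icc 1 (n / k), h k (k * l)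
      = ∑ m ∈ Icc 1 n, ∑ k ∈ m.divisors, h k m := by
  rw [Finset.sum_sigma', Finset.sum_sigma']
  refine Finset.sum_nbij' (fun x => ⟨x.1 * x.2, x.1⟩) (fun x => ⟨x.2, x.1 / x.2⟩) ?_ ?_ ?_ ?_ ?_
  · rintro ⟨k, l⟩ hx
    simp only [Finset.mem_sigma, Finset.mem_Icc] at hx ⊢
    obtain ⟨⟨hk1, hkn⟩, hl1, hln⟩ := hx
    have hk0 : 0 < k := hk1
    constructor
    · constructor
      · exact Nat.one_le_iff_ne_zero.mpr (Nat.mul_ne_zero (by omega) (by omega))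
      · calc k * l ≤ k * (n / k) := Nat.mul_le_mul_left k hln
          _ ≤ n := Nat.mul_div_le n k
    · exact Nat.mem_divisors.mpr ⟨dvd_mul_right k l, Nat.mul_ne_zero (by omega) (by omega)⟩
  · rintro ⟨m, k⟩ hx
    simp only [Finset.mem_sigma, Finset.mem_Icc, Nat.mem_divisors] at hx ⊢
    obtain ⟨⟨hm1, hmn⟩, hkm, hm0⟩ := hx
    have hk0 : 0 < k := Nat.pos_of_dvd_of_pos hkm (Nat.pos_of_ne_zero hm0)
    have hmk : k ≤ m := Nat.le_of_dvd (Nat.pos_of_ne_zero hm0) hkm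
    refine ⟨⟨hk0, hmk.trans hmn⟩, ?_, Nat.div_le_div_right hmn⟩
    exact (Nat.one_le_div_iff hk0).mpr hmk
  · rintro ⟨k, l⟩ hx
    simp only [Finset.mem_sigma, Finset.mem_Icc] at hx
    obtain ⟨⟨hk1, _⟩, _, _⟩ := hx
    simp [Nat.mul_div_cancel_left l (by omega : 0 < k)]
  · rintro ⟨m, k⟩ hx
    simp only [Finset.mem_sigma, Finset.mem_Icc, Nat.mem_divisors] at hx
    obtain ⟨⟨hm1, _⟩, hkm, hm0⟩ := hx
    simp [Nat.mul_div_cancel' hkm]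
  · rintro ⟨k, l⟩ _
    rfl

theorem log_sum_vanishes (n : ℕ) (hn : 0 < n) :
    ∑ k ∈ Icc 1 n,
        (μ (k / Nat.gcd n k) : ℝ) *
          ((Nat.totient k : ℝ) / (Nat.totient (k / Nat.gcd n k) : ℝ)) *
          ∑ l ∈ Icc 1 (n / k),
            Real.log (((k : ℝ) * l) ^ 2 / n) / ((k : ℝ) * l) = 0 := by
  have hn' : n ≠ 0 := hn.ne'
  set f : ℕ → ℝ := fun m => Real.log ((m : ℝ) ^ 2 / n) / m with hf
  have step1 : ∑ k ∈ Icc 1 n,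
        (μ (k / Nat.gcd n k) : ℝ) *
          ((Nat.totient k : ℝ) / (Nat.totient (k / Nat.gcd n k) : ℝ)) *
          ∑ l ∈ Icc 1 (n / k),
            Real.log (((k : ℝ) * l) ^ 2 / n) / ((k : ℝ) * l)
      = ∑ k ∈ Icc 1 n, ∑ l ∈ Icc 1 (n / k), gfun n k * f (k * l) := by
    refine Finset.sum_congr rfl fun k _ => ?_
    rw [Finset.mul_sum]
    refine Finset.sum_congr rfl fun l _ => ?_
    show _ = gfun n k * (Real.log (((k * l : ℕ) : ℝ) ^ 2 / n) / ((k * l : ℕ) : ℝ))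
    unfold gfun
    push_cast
    ring
  rw [step1, swap_sum n (fun k m => gfun n k * f m)]
  have step2 : ∑ m ∈ Icc 1 n, ∑ k ∈ m.divisors, gfun n k * f m
      = ∑ m ∈ Icc 1 n, (if m ∣ n then (m : ℝ) else 0) * f m := by
    refine Finset.sum_congr rfl fun m _ => ?_
    rw [← Finset.sum_mul, divisor_sum_eq n hn' m]
  rw [step2]
  have step3 : ∑ m ∈ Icc 1 n, (if m ∣ n then (m : ℝ) else 0) * f m
      = ∑ m ∈ n.divisors, (m : ℝ) * f m := by
    have hIcc : Finset.filter (· ∣ n) (Icc 1 n) = n.divisors := by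
      rw [← Finset.Ico_add_one_right_eq_Icc]; rfl
    rw [← hIcc, Finset.sum_filter]
    refine Finset.sum_congr rfl fun m _ => ?_
    by_cases h : m ∣ n <;> simp [h]
  rw [step3]
  have step4 : ∑ m ∈ n.divisors, (m : ℝ) * f m
      = ∑ m ∈ n.divisors, Real.log ((m : ℝ) ^ 2 / n) := by
    refine Finset.sum_congr rfl fun m hm => ?_
    have hm0 : m ≠ 0 := Nat.pos_of_mem_divisors hm |>.ne'
    have : ((m : ℝ)) ≠ 0 := Nat.cast_ne_zero.mpr hm0
    rw [hf, mul_comm]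
    exact div_mul_cancel₀ _ this
  rw [step4]
  have anti : ∀ m ∈ n.divisors, Real.log ((↑(n / m) : ℝ) ^ 2 / n)
      = - Real.log ((m : ℝ) ^ 2 / n) := by
    intro m hm
    obtain ⟨hdvd, _⟩ := Nat.mem_divisors.mp hm
    have hm0 : (m : ℝ) ≠ 0 := Nat.cast_ne_zero.mpr (Nat.pos_of_mem_divisors hm).ne'
    have hn0 : (n : ℝ) ≠ 0 := Nat.cast_ne_zero.mpr hn'
    have hcast : ((n / m : ℕ) : ℝ) = (n : ℝ) / m := Nat.cast_div hdvd hm0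
    have hnm : (n : ℝ) / m ≠ 0 := div_ne_zero hn0 hm0
    rw [hcast, Real.log_div (pow_ne_zero 2 hnm) hn0, Real.log_div (pow_ne_zero 2 hm0) hn0,
      Real.log_pow, Real.log_pow, Real.log_div hn0 hm0]
    ring
  have h1 := Nat.sum_div_divisors n (fun m => Real.log ((m : ℝ) ^ 2 / n))
  rw [Finset.sum_congr rfl anti, Finset.sum_neg_distrib] at h1
  linarith
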